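/- Let W ∈ ℝ^{n×n} satisfy Assumption 1 with normalized left Perron eigenvector w, and let r_max = max{|λ| : λ is a (complex) eigenvalue of W, λ ≠ 1} (which is < 1). For any real α with 0 < α < (1 − r_max)/(1 + r_max), the feedback matrix K = −α(I − W) satisfies: (i) K·1 = 0 and wᵀK = 0; (ii) K_{ij} = 0 whenever W_{ij} = 0 with i ≠ j; (iii) 1 is a simple eigenvalue of W+K = (1+α)W − αI and every other eigenvalue of W+K has modulus strictly less than 1; and (iv) for every x₀ ∈ ℝ^n, lim_{t→∞} (W+K)^t x₀ = (wᵀx₀)·1. -/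

import Mathlib

open Matrix Filter Polynomial Topology

attribute [local instance] Matrix.linftyOpNormedRing Matrix.linftyOpNormedAlgebra

lemma my_eval_charpoly {m : ℕ} {R : Type*} [CommRing R] (M : Matrix (Fin m) (Fin m) R) (x : R) :
    M.charpoly.eval x = (x • (1 : Matrix (Fin m) (Fin m) R) - M).det := by
  rw [Matrix.charpoly, ← Polynomial.coe_evalRingHom, RingHom.map_det]
  congr 1
  ext i j
  by_cases h : i = j
  · subst h; simp [Matrix.charmatrix_apply_eq, Matrix.one_apply]
  · simp [Matrix.charmatrix_apply_ne _ _ _ h, Matrix.one_apply, h]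

lemma aux_dvd_comp {k : ℕ} {p : Polynomial ℂ} (c a b : ℂ) (hab : a + b = 1)
    (h : (X - C 1) ^ k ∣ p) :
    (X - C 1) ^ k ∣ C c * p.comp (C a * X + C b) := by
  obtain ⟨q, rfl⟩ := h
  have h2 : C a * X + C b - C 1 = C a * (X - C 1) := by
    have hb : (C b : ℂ[X]) - C 1 = -C a := by
      rw [← C_sub, ← C_neg]
      congr 1
      linear_combination hab
    rw [add_sub_assoc, hb]
    simp only [C_1]
    ring
  refine ⟨C c * (C a ^ k * q.comp (C a * X + C b)), ?_⟩
  rw [mul_comp, pow_comp, sub_comp, X_comp, C_comp, h2, mul_pow]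
  simp only [C_1]
  ring

lemma aux_pow_tendsto_zero {n : ℕ} (M : Matrix (Fin n) (Fin n) ℂ) (s : ℝ)
    (hs0 : 0 ≤ s) (hs1 : s < 1)
    (hspec : ∀ μ : ℂ, μ ∈ spectrum ℂ M → ‖μ‖ ≤ s) :
    Tendsto (fun t : ℕ => ‖M ^ t‖) atTop (𝓝 0) := by
  haveI : CompleteSpace (Matrix (Fin n) (Fin n) ℂ) := FiniteDimensional.complete ℂ _
  have hρ : spectralRadius ℂ M ≤ ENNReal.ofReal s := by
    rw [spectralRadius]
    refine iSup₂_le fun μ hμ => ?_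
    rw [← enorm_eq_nnnorm, ← ofReal_norm]
    exact ENNReal.ofReal_le_ofReal (hspec μ hμ)
  set c : ℝ := (s + 1) / 2 with hc
  have hc0 : 0 < c := by rw [hc]; linarith
  have hc1 : c < 1 := by rw [hc]; linarith
  have hsc : s < c := by rw [hc]; linarith
  have hρc : spectralRadius ℂ M < ENNReal.ofReal c :=
    lt_of_le_of_lt hρ (by rw [ENNReal.ofReal_lt_ofReal_iff hc0]; exact hsc)
  have hg := spectrum.pow_nnnorm_pow_one_div_tendsto_nhds_spectralRadius M
  have hev : ∀ᶠ t : ℕ in atTop, (‖M ^ t‖₊ : ENNReal) ^ (1 / (t : ℝ)) < ENNReal.ofReal c :=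
    hg.eventually (gt_mem_nhds hρc)
  have hbd : ∀ᶠ t : ℕ in atTop, ‖M ^ t‖ ≤ c ^ t := by
    filter_upwards [hev, eventually_ge_atTop 1] with t ht ht1
    have htne : (t : ℝ) ≠ 0 := Nat.cast_ne_zero.mpr (by omega)
    have h1 : ((‖M ^ t‖₊ : ENNReal) ^ ((1 : ℝ) / t)) ^ (t : ℝ) ≤ (ENNReal.ofReal c) ^ (t : ℝ) :=
      ENNReal.rpow_le_rpow ht.le (by positivity)
    rw [← ENNReal.rpow_mul, one_div, inv_mul_cancel₀ htne, ENNReal.rpow_one,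
      ENNReal.ofReal_rpow_of_pos hc0, ← enorm_eq_nnnorm, ← ofReal_norm,
      ENNReal.ofReal_le_ofReal_iff (by positivity)] at h1
    simpa [Real.rpow_natCast] using h1
  exact squeeze_zero' (Eventually.of_forall fun t => norm_nonneg _) hbd
    (tendsto_pow_atTop_nhds_zero_of_lt_one hc0.le hc1)

lemma aux_vecMul_smul {n : ℕ} {R : Type*} [CommRing R] (x : Fin n → R) (a : R)
    (M : Matrix (Fin n) (Fin n) R) : x ᵥ* (a • M) = a • (x ᵥ* M) := by
  funext j
  simp only [Matrix.vecMul, dotProduct, Matrix.smul_apply, smul_eq_mul, Pi.smul_apply,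
    Finset.mul_sum]
  exact Finset.sum_congr rfl fun i _ => by ring

/-- Assumption 1: `W` is row-stochastic, `1` is a simple eigenvalue of `W` (over `ℂ`),
all other eigenvalues have modulus `< 1`, and `w` is the normalized left Perron
eigenvector of `W`. -/
def Assumption1 {n : ℕ} (W : Matrix (Fin n) (Fin n) ℝ) (w : Fin n → ℝ) : Prop :=
  (∀ i j, 0 ≤ W i j) ∧
  W *ᵥ (1 : Fin n → ℝ) = 1 ∧
  ((W.map (algebraMap ℝ ℂ)).charpoly.rootMultiplicity 1 = 1) ∧
  (∀ μ : ℂ, (W.map (algebraMap ℝ ℂ)).charpoly.IsRoot μ → μ ≠ 1 → ‖μ‖ < 1) ∧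
  w ᵥ* W = w ∧
  w ⬝ᵥ (1 : Fin n → ℝ) = 1

set_option maxHeartbeats 1000000 in
/-- The distributed Laplacian-type feedback `K = -α (I - W)` with
`0 < α < (1 - r_max)/(1 + r_max)` satisfies all design requirements:
eigenvector-preserving constraints, sparsity, spectral conditions, and consensus
preservation. Here `r_max < 1` bounds the moduli of the non-unit eigenvalues of `W`. -/
theorem stmt11 {n : ℕ} (W : Matrix (Fin n) (Fin n) ℝ) (w : Fin n → ℝ)
    (hW : Assumption1 W w) (r_max : ℝ) (hr0 : 0 ≤ r_max) (hr1 : r_max < 1)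
    (hrmax : ∀ μ : ℂ, (W.map (algebraMap ℝ ℂ)).charpoly.IsRoot μ → μ ≠ 1 →
      ‖μ‖ ≤ r_max)
    (hrmax_attained : (∃ μ : ℂ, (W.map (algebraMap ℝ ℂ)).charpoly.IsRoot μ ∧ μ ≠ 1) →
      ∃ μ : ℂ, (W.map (algebraMap ℝ ℂ)).charpoly.IsRoot μ ∧ μ ≠ 1 ∧
        ‖μ‖ = r_max)
    (α : ℝ) (hα0 : 0 < α) (hα : α < (1 - r_max) / (1 + r_max)) :
    ∀ K : Matrix (Fin n) (Fin n) ℝ, K = -α • ((1 : Matrix (Fin n) (Fin n) ℝ) - W) →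
      K *ᵥ (1 : Fin n → ℝ) = 0 ∧
      w ᵥ* K = 0 ∧
      (∀ i j, W i j = 0 → i ≠ j → K i j = 0) ∧
      (((W + K).map (algebraMap ℝ ℂ)).charpoly.rootMultiplicity 1 = 1) ∧
      (∀ μ : ℂ, ((W + K).map (algebraMap ℝ ℂ)).charpoly.IsRoot μ → μ ≠ 1 →
        ‖μ‖ < 1) ∧
      (∀ x₀ : Fin n → ℝ,
        Tendsto (fun t : ℕ => ((W + K) ^ t) *ᵥ x₀) atTop
          (nhds ((w ⬝ᵥ x₀) • (1 : Fin n → ℝ)))) := by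
  obtain ⟨hWpos, hW1, hWm, hWlt, hwW, hw1⟩ := hW
  intro K hK
  -- scalar facts
  have h1r : (0:ℝ) < 1 + r_max := by linarith
  have hα1 : α < 1 := lt_of_lt_of_le hα (by rw [div_le_one h1r]; linarith)
  have h1α : (0:ℝ) < 1 + α := by linarith
  have hαr : α * (1 + r_max) < 1 - r_max := (lt_div_iff₀ h1r).mp hα
  set s : ℝ := (1 + α) * r_max + α with hs
  have hs0 : 0 ≤ s := by rw [hs]; nlinarith
  have hs1 : s < 1 := by rw [hs]; nlinarith
  -- n ≠ 0
  have hn : n ≠ 0 := by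
    intro h
    subst h
    rw [Matrix.charpoly, Matrix.det_isEmpty,
      Polynomial.rootMultiplicity_eq_zero (by simp [Polynomial.IsRoot])] at hWm
    exact one_ne_zero hWm.symm
  -- matrix algebra setup
  have hA : W + K = (1 + α) • W - α • (1 : Matrix (Fin n) (Fin n) ℝ) := by
    rw [hK]
    ext i j
    simp only [Matrix.add_apply, Matrix.smul_apply, Matrix.sub_apply, smul_eq_mul]
    ring
  set Wc := W.map (algebraMap ℝ ℂ) with hWcdef
  set Ac := (W + K).map (algebraMap ℝ ℂ) with hAcdef
  set u : ℂ := ((1 + α : ℝ) : ℂ) with hudef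
  have hu : u ≠ 0 := by
    rw [hudef]
    exact_mod_cast ne_of_gt h1α
  have hAcW : Ac = u • Wc - (α : ℂ) • 1 := by
    rw [hAcdef, hA]
    ext i j
    by_cases h : i = j
    · subst h
      simp only [Matrix.map_apply, Matrix.sub_apply, Matrix.smul_apply, Matrix.one_apply_eq,
        smul_eq_mul, hudef, hWcdef, Complex.coe_algebraMap]
      push_cast
      ring
    · simp only [Matrix.map_apply, Matrix.sub_apply, Matrix.smul_apply, Matrix.one_apply_ne h,
        smul_eq_mul, hudef, hWcdef, Complex.coe_algebraMap]
      push_cast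
      ring
  have hdet : ∀ x : ℂ, x • (1 : Matrix (Fin n) (Fin n) ℂ) - Ac
      = u • (((x + α) / u) • (1 : Matrix (Fin n) (Fin n) ℂ) - Wc) := by
    intro x
    have huv : u * ((x + (α:ℂ)) / u) = x + (α:ℂ) := by rw [mul_comm, div_mul_cancel₀ _ hu]
    rw [hAcW, smul_sub, smul_smul, huv]
    module
  have hcard : Fintype.card (Fin n) = n := Fintype.card_fin n
  have hevalA : ∀ x : ℂ, Ac.charpoly.eval x = u ^ n * Wc.charpoly.eval ((x + α) / u) := by
    intro x
    rw [my_eval_charpoly, my_eval_charpoly, hdet x, Matrix.det_smul, hcard]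
  have hA0 : Ac.charpoly ≠ 0 := (Matrix.charpoly_monic _).ne_zero
  have hW0 : Wc.charpoly ≠ 0 := (Matrix.charpoly_monic _).ne_zero
  -- bound on non-unit roots of Ac
  have hbound : ∀ μ : ℂ, Ac.charpoly.IsRoot μ → μ ≠ 1 → ‖μ‖ ≤ s := by
    intro μ hroot hμ1
    have hlam : Wc.charpoly.IsRoot ((μ + α) / u) := by
      have h0 : u ^ n * Wc.charpoly.eval ((μ + α) / u) = 0 := by
        rw [← hevalA μ]; exact hroot
      exact (mul_eq_zero.mp h0).resolve_left (pow_ne_zero _ hu)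
    have hlam1 : (μ + α) / u ≠ 1 := by
      intro h
      apply hμ1
      rw [div_eq_one_iff_eq hu, hudef] at h
      push_cast at h
      linear_combination h
    have habs := hrmax _ hlam hlam1
    have hμeq : μ = u * ((μ + α) / u) - α := by
      rw [mul_comm, div_mul_cancel₀ _ hu]; ring
    rw [hμeq]
    have h3 : ‖u * ((μ + α) / u) - (α:ℂ)‖ ≤ ‖u‖ * ‖(μ + α) / u‖ + ‖(α:ℂ)‖ :=
      le_trans (norm_sub_le _ _) (by rw [norm_mul])
    have hnu : ‖u‖ = 1 + α := by
      rw [hudef, Complex.norm_real, Real.norm_eq_abs, abs_of_pos h1α]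
    have hnα : ‖(α:ℂ)‖ = α := by
      rw [Complex.norm_real, Real.norm_eq_abs, abs_of_pos hα0]
    have hnlam : ‖(μ + α) / u‖ ≤ r_max := by exact habs
    rw [hs]
    rw [hnu, hnα] at h3
    nlinarith [norm_nonneg ((μ + α) / u)]
  -- root multiplicity of Ac at 1
  have hl1 : (X - C 1) ^ 1 ∣ Wc.charpoly := by
    have h0 := Polynomial.pow_rootMultiplicity_dvd Wc.charpoly 1
    rwa [hWm] at h0
  have hI1 : Ac.charpoly = C (u ^ n) * (Wc.charpoly.comp (C u⁻¹ * X + C ((α:ℂ) / u))) := by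
    apply Polynomial.funext
    intro x
    rw [hevalA x, eval_mul, eval_C, eval_comp, eval_add, eval_mul, eval_C, eval_X, eval_C]
    congr 2
    rw [add_div, div_eq_inv_mul]
  have hevalW : ∀ x : ℂ, Wc.charpoly.eval x = (u⁻¹) ^ n * Ac.charpoly.eval (u * x - α) := by
    intro x
    rw [hevalA (u * x - α)]
    have h4 : (u * x - α + α) / u = x := by
      rw [sub_add_cancel, mul_comm, mul_div_assoc, div_self hu, mul_one]
    rw [h4, ← mul_assoc, ← mul_pow, inv_mul_cancel₀ hu, one_pow, one_mul]
  have hI2 : Wc.charpoly = C ((u⁻¹) ^ n) * (Ac.charpoly.comp (C u * X + C (-(α:ℂ)))) := by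
    apply Polynomial.funext
    intro x
    rw [hevalW x, eval_mul, eval_C, eval_comp, eval_add, eval_mul, eval_C, eval_X, eval_C]
    ring_nf
  have hrmA : Ac.charpoly.rootMultiplicity 1 = 1 := by
    have hd1 : (X - C 1) ^ 1 ∣ Ac.charpoly := by
      rw [hI1]
      refine aux_dvd_comp _ _ _ ?_ hl1
      have h9 : u⁻¹ + (α:ℂ)/u = ((1:ℂ) + α)/u := by rw [inv_eq_one_div, ← add_div]
      have h10 : ((1:ℂ) + (α:ℝ)) = u := by rw [hudef]; push_cast; ring
      rw [h9, h10, div_self hu]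
    have hge : 1 ≤ Ac.charpoly.rootMultiplicity 1 :=
      (Polynomial.le_rootMultiplicity_iff hA0).mpr hd1
    have hle : Ac.charpoly.rootMultiplicity 1 ≤ 1 := by
      rw [Polynomial.rootMultiplicity_le_iff hA0]
      intro hdvd
      have hWdvd : (X - C 1) ^ (1 + 1) ∣ Wc.charpoly := by
        rw [hI2]
        refine aux_dvd_comp _ _ _ ?_ hdvd
        rw [hudef]
        push_cast
        ring
      have h5 := (Polynomial.le_rootMultiplicity_iff hW0).mpr hWdvd
      omega
    omega

  -- projection matrix and friends (real)
  set P : Matrix (Fin n) (Fin n) ℝ := Matrix.vecMulVec (1 : Fin n → ℝ) w with hPdef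
  set B : Matrix (Fin n) (Fin n) ℝ := W + K - P with hBdef
  have hA1 : (W + K) *ᵥ (1 : Fin n → ℝ) = 1 := by
    rw [hA, Matrix.sub_mulVec, Matrix.smul_mulVec, Matrix.smul_mulVec, hW1,
      Matrix.one_mulVec]
    funext i
    simp only [Pi.sub_apply, Pi.smul_apply, Pi.one_apply, smul_eq_mul]
    ring
  have hwA : w ᵥ* (W + K) = w := by
    rw [hA, Matrix.vecMul_sub, aux_vecMul_smul, aux_vecMul_smul, hwW, Matrix.vecMul_one]
    funext i
    simp only [Pi.sub_apply, Pi.smul_apply, smul_eq_mul]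
    ring
  have hsum1 : ∑ j, w j = 1 := by
    have h6 := hw1
    simp only [dotProduct, Pi.one_apply, mul_one] at h6
    exact h6
  have hAP : (W + K) * P = P := by
    ext i j
    have h6 : ∑ k, (W + K) i k = 1 := by
      have := congrFun hA1 i
      simpa [Matrix.mulVec, dotProduct] using this
    simp only [Matrix.mul_apply, hPdef, Matrix.vecMulVec_apply, Pi.one_apply, one_mul]
    rw [← Finset.sum_mul, h6, one_mul]
  have hPA : P * (W + K) = P := by
    ext i j
    have h6 : ∑ k, w k * (W + K) k j = w j := by
      have := congrFun hwA j
      simpa [Matrix.vecMul, dotProduct] using this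
    simp only [Matrix.mul_apply, hPdef, Matrix.vecMulVec_apply, Pi.one_apply, one_mul]
    exact h6
  have hPP : P * P = P := by
    ext i j
    simp only [Matrix.mul_apply, hPdef, Matrix.vecMulVec_apply, Pi.one_apply, one_mul]
    rw [← Finset.sum_mul, hsum1, one_mul]
  have hBP : B * P = 0 := by
    rw [hBdef, Matrix.sub_mul, hAP, hPP, sub_self]
  have hpow : ∀ t : ℕ, 1 ≤ t → (W + K) ^ t = B ^ t + P := by
    intro t ht
    induction t with
    | zero => omega
    | succ m ih =>
      rcases Nat.eq_zero_or_pos m with hm | hm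
      · subst hm
        simp only [zero_add, pow_one, hBdef]
        abel
      · have ihm := ih hm
        have hBmP : B ^ m * P = 0 := by
          obtain ⟨k, rfl⟩ := Nat.exists_eq_add_of_le hm
          rw [add_comm, pow_succ, Matrix.mul_assoc, hBP, Matrix.mul_zero]
        have hWKB : W + K = B + P := by rw [hBdef]; abel
        calc (W + K) ^ (m + 1) = (W + K) ^ m * (W + K) := pow_succ _ _
          _ = (B ^ m + P) * (W + K) := by rw [ihm]
          _ = B ^ m * (W + K) + P * (W + K) := Matrix.add_mul _ _ _
          _ = B ^ m * (B + P) + P := by rw [hPA, hWKB]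
          _ = B ^ m * B + B ^ m * P + P := by rw [Matrix.mul_add]
          _ = B ^ (m + 1) + P := by rw [hBmP, pow_succ]; abel
  -- complex side
  set wc : Fin n → ℂ := fun i => ((w i : ℝ) : ℂ) with hwcdef
  set Pc : Matrix (Fin n) (Fin n) ℂ := Matrix.vecMulVec (1 : Fin n → ℂ) wc with hPcdef
  set Bc : Matrix (Fin n) (Fin n) ℂ := B.map (algebraMap ℝ ℂ) with hBcdef
  have hBcAP : Bc = Ac - Pc := by
    ext i j
    simp only [hBcdef, hBdef, hAcdef, hPcdef, Matrix.map_apply, Matrix.sub_apply,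
      Matrix.vecMulVec_apply, Pi.one_apply, one_mul, hPdef, hwcdef, Complex.coe_algebraMap]
    push_cast
    ring
  have hwc1 : wc ⬝ᵥ (1 : Fin n → ℂ) = 1 := by
    simp only [hwcdef, dotProduct, Pi.one_apply, mul_one]
    rw [← Complex.ofReal_sum, hsum1, Complex.ofReal_one]
  have hAc1 : Ac *ᵥ (1 : Fin n → ℂ) = 1 := by
    funext i
    have h1 : ∑ j, (W + K) i j = 1 := by
      have := congrFun hA1 i
      simpa [Matrix.mulVec, dotProduct] using this
    simp only [hAcdef, Matrix.mulVec, dotProduct, Matrix.map_apply, Pi.one_apply, mul_one,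
      Complex.coe_algebraMap]
    rw [← Complex.ofReal_sum, h1, Complex.ofReal_one]
  have hBc0 : Bc.charpoly ≠ 0 := (Matrix.charpoly_monic _).ne_zero
  -- key polynomial identity
  have hkey : (X - C 1) * Bc.charpoly = X * Ac.charpoly := by
    apply Polynomial.eq_of_infinite_eval_eq
    apply Set.Infinite.mono (s := ({(1:ℂ)} ∪ {x | Ac.charpoly.IsRoot x})ᶜ)
    · intro x hx
      simp only [Set.mem_compl_iff, Set.mem_union, Set.mem_singleton_iff, Set.mem_setOf_eq,
        not_or] at hx
      obtain ⟨hx1, hxr⟩ := hx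
      have hdetA : (x • (1 : Matrix (Fin n) (Fin n) ℂ) - Ac).det ≠ 0 := by
        rw [← my_eval_charpoly]; exact hxr
      have hdetU : IsUnit (x • (1 : Matrix (Fin n) (Fin n) ℂ) - Ac).det :=
        isUnit_iff_ne_zero.mpr hdetA
      set M : Matrix (Fin n) (Fin n) ℂ := x • 1 - Ac with hM
      have hM1 : M *ᵥ (1 : Fin n → ℂ) = (x - 1) • 1 := by
        rw [hM, Matrix.sub_mulVec, Matrix.smul_mulVec, Matrix.one_mulVec, hAc1]
        funext i
        simp only [Pi.sub_apply, Pi.smul_apply, Pi.one_apply, smul_eq_mul]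
        ring
      have hx1' : x - 1 ≠ 0 := sub_ne_zero.mpr hx1
      have hMinv : M⁻¹ *ᵥ (1 : Fin n → ℂ) = (x - 1)⁻¹ • 1 := by
        have h2 : M⁻¹ *ᵥ (M *ᵥ (1 : Fin n → ℂ)) = 1 := by
          rw [Matrix.mulVec_mulVec, Matrix.nonsing_inv_mul _ hdetU, Matrix.one_mulVec]
        rw [hM1, Matrix.mulVec_smul] at h2
        calc M⁻¹ *ᵥ (1 : Fin n → ℂ) = (x - 1)⁻¹ • ((x - 1) • (M⁻¹ *ᵥ (1 : Fin n → ℂ))) := by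
              rw [smul_smul, inv_mul_cancel₀ hx1', one_smul]
          _ = (x - 1)⁻¹ • 1 := by rw [h2]
      show Polynomial.eval x ((X - C 1) * Bc.charpoly) = Polynomial.eval x (X * Ac.charpoly)
      rw [eval_mul, eval_mul, eval_sub, eval_X, eval_C, my_eval_charpoly, my_eval_charpoly]
      have hsplit : x • (1 : Matrix (Fin n) (Fin n) ℂ) - Bc
          = M + Matrix.replicateCol Unit (1 : Fin n → ℂ) * Matrix.replicateRow Unit wc := by
        rw [← Matrix.vecMulVec_eq Unit, ← hPcdef, hBcAP, hM]
        abel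
      rw [hsplit, Matrix.det_add_replicateCol_mul_replicateRow hdetU, Matrix.mul_assoc, ← Matrix.replicateCol_mulVec,
        hMinv]
      rw [Matrix.det_unique (1 + Matrix.replicateRow Unit wc * Matrix.replicateCol Unit (((x:ℂ) - 1)⁻¹ • 1))]
      simp only [Matrix.add_apply, Matrix.one_apply_eq, Matrix.replicateRow_mul_replicateCol_apply,
        dotProduct_smul, hwc1, smul_eq_mul, mul_one]
      rw [← hM]
      field_simp
      ring
    · apply Set.Finite.infinite_compl
      exact (Set.finite_singleton 1).union (Polynomial.finite_setOf_isRoot hA0)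
  -- spectrum bound for Bc
  have hrmABc : Ac.charpoly.rootMultiplicity 1 = 1 := hrmA
  have hspec : ∀ μ : ℂ, μ ∈ spectrum ℂ Bc → ‖μ‖ ≤ s := by
    intro μ hμ
    have hroot : Bc.charpoly.IsRoot μ := by
      rw [spectrum.mem_iff] at hμ
      by_contra hroot
      apply hμ
      rw [Algebra.algebraMap_eq_smul_one, Matrix.isUnit_iff_isUnit_det, isUnit_iff_ne_zero]
      intro h0
      apply hroot
      rw [Polynomial.IsRoot, my_eval_charpoly]
      exact h0
    have hident := congrArg (Polynomial.eval μ) hkey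
    rw [eval_mul, eval_mul, eval_sub, eval_X, eval_C, hroot.eq_zero, mul_zero] at hident
    rcases mul_eq_zero.mp hident.symm with h0 | hAroot
    · rw [h0]; simpa using hs0
    · by_cases hμ1 : μ = 1
      · exfalso
        have hX1 : (X - C 1 : ℂ[X]) ≠ 0 := Polynomial.X_sub_C_ne_zero 1
        have hXne : (X : ℂ[X]) ≠ 0 := Polynomial.X_ne_zero
        have h2 : ((X - C 1) * Bc.charpoly).rootMultiplicity 1
            = (X * Ac.charpoly).rootMultiplicity 1 := by rw [hkey]
        rw [Polynomial.rootMultiplicity_mul (mul_ne_zero hX1 hBc0),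
          Polynomial.rootMultiplicity_mul (mul_ne_zero hXne hA0),
          Polynomial.rootMultiplicity_X_sub_C_self, hrmA,
          Polynomial.rootMultiplicity_eq_zero (p := X) (x := 1) (by simp [Polynomial.IsRoot])] at h2
        have h7 := (Polynomial.rootMultiplicity_pos hBc0).mpr (hμ1 ▸ hroot)
        omega
      · exact hbound μ hAroot hμ1
  have htend := aux_pow_tendsto_zero Bc s hs0 hs1 hspec
  have hmpow : ∀ t : ℕ, Bc ^ t = (B ^ t).map (algebraMap ℝ ℂ) := by
    intro t
    rw [hBcdef, ← RingHom.mapMatrix_apply, ← RingHom.mapMatrix_apply, map_pow]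
  refine ⟨?_, ?_, ?_, hrmA, fun μ h h1 => lt_of_le_of_lt (hbound μ h h1) hs1, ?_⟩
  · rw [hK, Matrix.smul_mulVec, Matrix.sub_mulVec, Matrix.one_mulVec, hW1, sub_self,
      smul_zero]
  · rw [hK, aux_vecMul_smul, Matrix.vecMul_sub, Matrix.vecMul_one, hwW, sub_self, smul_zero]
  · intro i j hWij hij
    rw [hK]
    simp [Matrix.smul_apply, Matrix.sub_apply, Matrix.one_apply_ne hij, hWij]
  · intro x₀
    set x₀c : Fin n → ℂ := fun j => ((x₀ j : ℝ) : ℂ) with hx0cdef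
    have hcoord : ∀ (t : ℕ) (i : Fin n), (Bc ^ t *ᵥ x₀c) i = (((B ^ t *ᵥ x₀) i : ℝ) : ℂ) := by
      intro t i
      rw [hmpow t]
      simp only [Matrix.mulVec, dotProduct, Matrix.map_apply, hx0cdef, Complex.coe_algebraMap]
      push_cast
      rfl
    have hPx : P *ᵥ x₀ = (w ⬝ᵥ x₀) • (1 : Fin n → ℝ) := by
      funext i
      simp only [hPdef, Matrix.mulVec, dotProduct, Matrix.vecMulVec_apply, Pi.one_apply,
        one_mul, Pi.smul_apply, smul_eq_mul, mul_one]
    rw [tendsto_pi_nhds]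
    intro i
    have hzero : Tendsto (fun t : ℕ => (B ^ t *ᵥ x₀) i) atTop (𝓝 0) := by
      apply squeeze_zero_norm (a := fun t : ℕ => ‖Bc ^ t‖ * ‖x₀c‖)
      · intro t
        have h8 : ‖(B ^ t *ᵥ x₀) i‖ = ‖(Bc ^ t *ᵥ x₀c) i‖ := by
          rw [hcoord t i, Complex.norm_real]
        rw [h8]
        exact le_trans (norm_le_pi_norm _ i) (Matrix.linfty_opNorm_mulVec _ _)
      · have := htend.mul_const ‖x₀c‖
        rwa [zero_mul] at this
    have heq : ∀ᶠ t : ℕ in atTop,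
        (fun t : ℕ => (B ^ t *ᵥ x₀) i + (w ⬝ᵥ x₀)) t = ((W + K) ^ t *ᵥ x₀) i := by
      filter_upwards [eventually_ge_atTop 1] with t ht
      rw [hpow t ht, Matrix.add_mulVec, hPx]
      simp only [Pi.add_apply, Pi.smul_apply, Pi.one_apply, smul_eq_mul, mul_one]
    have hlim : Tendsto (fun t : ℕ => (B ^ t *ᵥ x₀) i + (w ⬝ᵥ x₀)) atTop
        (𝓝 (0 + (w ⬝ᵥ x₀))) := hzero.add tendsto_const_nhds
    rw [zero_add] at hlim
    have := hlim.congr' heq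
    simpa using this
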